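/- Let τ ∈ (0, 1/2) satisfy (1-2τ)^{1-2τ} > 2^{2(1-τ)} τ^τ (1-τ)^{3(1-τ)}. Then there exists ζ > 1 and N₀ such that for all N ≥ N₀, b(3N, ⌈3τN⌉) > ζ^{√N} · b(N, ⌈2τN⌉), where b(N,k) = 2^{-N} C(N,k). -/

import Mathlib

open Finset Real


private lemma bre_step_up {n k j : ℕ} (hk : k ≤ n) (hj : j < k) :
    n.choose j * k^j * (n-k)^(n-j) ≤ n.choose (j+1) * k^(j+1) * (n-k)^(n-(j+1)) := by
  have key : n.choose j * (n-k) ≤ n.choose (j+1) * k := by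
    apply Nat.le_of_mul_le_mul_right _ (Nat.succ_pos j)
    have h2 : n.choose (j+1) * k * (j+1) = n.choose j * ((n-j) * k) := by
      rw [mul_right_comm, Nat.choose_succ_right_eq]; ring
    rw [h2, mul_assoc]
    exact Nat.mul_le_mul_left _ (Nat.mul_le_mul (Nat.sub_le_sub_left hj.le n) hj)
  have hpow : (n-k)^(n-j) = (n-k)^(n-(j+1)) * (n-k) := by
    rw [← pow_succ]
    congr 1
    omega
  calc n.choose j * k^j * (n-k)^(n-j)
      = (n.choose j * (n-k)) * (k^j * (n-k)^(n-(j+1))) := by rw [hpow]; ring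
    _ ≤ (n.choose (j+1) * k) * (k^j * (n-k)^(n-(j+1))) := Nat.mul_le_mul_right _ key
    _ = n.choose (j+1) * k^(j+1) * (n-k)^(n-(j+1)) := by rw [pow_succ]; ring

private lemma bre_step_down {n k j : ℕ} (hk : k ≤ j) (hj : j < n) :
    n.choose (j+1) * k^(j+1) * (n-k)^(n-(j+1)) ≤ n.choose j * k^j * (n-k)^(n-j) := by
  have key : n.choose (j+1) * k ≤ n.choose j * (n-k) := by
    apply Nat.le_of_mul_le_mul_right _ (Nat.succ_pos j)
    have h2 : n.choose (j+1) * k * (j+1) = n.choose j * ((n-j) * k) := by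
      rw [mul_right_comm, Nat.choose_succ_right_eq]; ring
    rw [h2, mul_assoc]
    exact Nat.mul_le_mul_left _ (Nat.mul_le_mul (Nat.sub_le_sub_left hk n) (Nat.le_succ_of_le hk))
  have hpow : (n-k)^(n-j) = (n-k)^(n-(j+1)) * (n-k) := by
    rw [← pow_succ]
    congr 1
    omega
  calc n.choose (j+1) * k^(j+1) * (n-k)^(n-(j+1))
      = (n.choose (j+1) * k) * (k^j * (n-k)^(n-(j+1))) := by rw [pow_succ]; ring
    _ ≤ (n.choose j * (n-k)) * (k^j * (n-k)^(n-(j+1))) := Nat.mul_le_mul_right _ key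
    _ = n.choose j * k^j * (n-k)^(n-j) := by rw [hpow]; ring

private lemma bre_le_peak {n k : ℕ} (hk : k ≤ n) :
    ∀ j, j ≤ n → n.choose j * k^j * (n-k)^(n-j) ≤ n.choose k * k^k * (n-k)^(n-k) := by
  intro j hjn
  rcases le_or_gt j k with hjk | hjk
  · have hup : ∀ m, j ≤ m → m ≤ k →
        n.choose j * k^j * (n-k)^(n-j) ≤ n.choose m * k^m * (n-k)^(n-m) := by
      intro m hjm
      induction m, hjm using Nat.le_induction with
      | base => intro _; exact le_rfl
      | succ m hm ih =>
        intro hmk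
        exact (ih (by omega)).trans (bre_step_up hk (by omega))
    exact hup k hjk le_rfl
  · have hdown : ∀ m, k ≤ m → m ≤ n →
        n.choose m * k^m * (n-k)^(n-m) ≤ n.choose k * k^k * (n-k)^(n-k) := by
      intro m hkm
      induction m, hkm using Nat.le_induction with
      | base => intro _; exact le_rfl
      | succ m hm ih =>
        intro hmn
        exact (bre_step_down hm (by omega)).trans (ih (by omega))
    exact hdown j hjk.le hjn

private lemma bre_sum_eq (n k : ℕ) (hk : k ≤ n) :
    n^n = ∑ j ∈ range (n+1), n.choose j * k^j * (n-k)^(n-j) := by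
  have := add_pow (R := ℕ) k (n-k) n
  rw [Nat.add_sub_cancel' hk] at this
  rw [this]
  refine Finset.sum_congr rfl fun j _ => by push_cast; ring

private lemma bre_choose_upper (n k : ℕ) (hk : k ≤ n) :
    n.choose k * k^k * (n-k)^(n-k) ≤ n^n := by
  rw [bre_sum_eq n k hk]
  exact Finset.single_le_sum (f := fun j => n.choose j * k^j * (n-k)^(n-j))
    (fun i _ => Nat.zero_le _) (Finset.mem_range.mpr (by omega))

private lemma bre_choose_lower (n k : ℕ) (hk : k ≤ n) :
    n^n ≤ (n+1) * (n.choose k * k^k * (n-k)^(n-k)) := by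
  rw [bre_sum_eq n k hk]
  calc ∑ j ∈ range (n+1), n.choose j * k^j * (n-k)^(n-j)
      ≤ (n+1) • (n.choose k * k^k * (n-k)^(n-k)) :=
        Finset.sum_le_card_nsmul _ _ _ (by
          intro j hj
          exact bre_le_peak hk j (by simpa using Nat.lt_succ_iff.mp (Finset.mem_range.mp hj))) |>.trans
          (by rw [Finset.card_range])
    _ = (n+1) * (n.choose k * k^k * (n-k)^(n-k)) := by rw [smul_eq_mul]

private lemma bre_phi_mono {x y : ℝ} (hx : 1 ≤ x) (hxy : x ≤ y) :
    x * Real.log x ≤ y * Real.log y := by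
  have h0 : 0 ≤ Real.log x := Real.log_nonneg hx
  have h1 : Real.log x ≤ Real.log y := Real.log_le_log (by linarith) hxy
  nlinarith

private lemma bre_phi_add_one {x : ℝ} (hx : 1 ≤ x) :
    (x+1) * Real.log (x+1) ≤ x * Real.log x + Real.log (x+1) + 1 := by
  have hx0 : 0 < x := by linarith
  have h1 : Real.log (x+1) - Real.log x ≤ 1/x := by
    rw [← Real.log_div (by linarith) (ne_of_gt hx0)]
    have h2 := Real.log_le_sub_one_of_pos (show 0 < (x+1)/x by positivity)
    have hd : (x+1)/x - 1 = 1/x := by field_simp; ring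
    linarith
  have h2 : x * (Real.log (x+1) - Real.log x) ≤ 1 := by
    calc x * (Real.log (x+1) - Real.log x) ≤ x * (1/x) :=
          mul_le_mul_of_nonneg_left h1 hx0.le
      _ = 1 := by field_simp
  nlinarith

private lemma bre_phi_sub_one {x : ℝ} (hx : 2 ≤ x) :
    x * Real.log x - Real.log x - 1 ≤ (x-1) * Real.log (x-1) := by
  have h1 : 1 ≤ x - 1 := by linarith
  have h2 := bre_phi_add_one h1
  have e : x - 1 + 1 = x := by ring
  rw [e] at h2
  linarith

private lemma bre_log_le_two_sqrt {x : ℝ} (hx : 1 ≤ x) : Real.log x ≤ 2 * Real.sqrt x := by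
  have h0 : 0 < x := by linarith
  have hs : 0 < Real.sqrt x := Real.sqrt_pos.mpr h0
  have h2 := Real.log_le_sub_one_of_pos hs
  rw [Real.log_sqrt h0.le] at h2
  linarith

private lemma bre_sqrt_four_mul (x : ℝ) (hx : 0 ≤ x) : Real.sqrt (4*x) = 2 * Real.sqrt x := by
  rw [Real.sqrt_mul (by norm_num) x, show (4:ℝ) = 2^2 by norm_num,
    Real.sqrt_sq (by norm_num : (0:ℝ) ≤ 2)]


/-- The symmetric binomial probability mass function `b(N,k) = 2⁻ᴺ C(N,k)`. -/
noncomputable def binomMass (N k : ℕ) : ℝ := (N.choose k : ℝ) / 2 ^ N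

set_option maxHeartbeats 2000000 in
/-- If `τ ∈ (0,1/2)` satisfies `(1-2τ)^{1-2τ} > 2^{2(1-τ)} τ^τ (1-τ)^{3(1-τ)}`, then there
exist `ζ > 1` and `N₀` such that for all `N ≥ N₀`,
`b(3N, ⌈3τN⌉) > ζ^{√N} · b(N, ⌈2τN⌉)`. -/
theorem binomial_ratio_exponential (τ : ℝ) (hτ : τ ∈ Set.Ioo (0 : ℝ) (1/2))
    (h : (1 - 2*τ) ^ (1 - 2*τ) > 2 ^ (2*(1 - τ)) * τ ^ τ * (1 - τ) ^ (3*(1 - τ))) :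
    ∃ ζ : ℝ, 1 < ζ ∧ ∃ N₀ : ℕ, ∀ N : ℕ, N₀ ≤ N →
      binomMass (3*N) ⌈3*τ*N⌉₊ > ζ ^ Real.sqrt N * binomMass N ⌈2*τ*N⌉₊ := by
  obtain ⟨hτ0, hτ2⟩ := hτ
  have h1τ : 0 < 1 - τ := by linarith
  have h12 : 0 < 1 - 2*τ := by linarith
  -- the exponential rate c > 0
  set c : ℝ := (1-2*τ)*Real.log (1-2*τ) - 2*(1-τ)*Real.log 2 - τ*Real.log τ
      - 3*(1-τ)*Real.log (1-τ) with hcdef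
  have hc : 0 < c := by
    have hx0 : (0:ℝ) < 2 ^ (2*(1 - τ)) * τ ^ τ * (1 - τ) ^ (3*(1 - τ)) :=
      mul_pos (mul_pos (Real.rpow_pos_of_pos two_pos _) (Real.rpow_pos_of_pos hτ0 _))
        (Real.rpow_pos_of_pos h1τ _)
    have hlog := Real.log_lt_log hx0 h
    rw [Real.log_rpow h12, Real.log_mul (by positivity) (by positivity),
      Real.log_mul (by positivity) (by positivity),
      Real.log_rpow two_pos, Real.log_rpow hτ0, Real.log_rpow h1τ] at hlog
    rw [hcdef]; linarith
  obtain ⟨n₁, hn₁⟩ := exists_nat_gt (1/(2*τ))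
  obtain ⟨n₂, hn₂⟩ := exists_nat_gt (2/(1-2*τ))
  obtain ⟨n₃, hn₃⟩ := exists_nat_gt ((13/c)^2)
  refine ⟨Real.exp 1, by linarith [Real.add_one_le_exp (1:ℝ)], max (max n₁ n₂) (max n₃ 1),
    fun N hN => ?_⟩
  set x : ℝ := (N:ℝ) with hxdef
  have hxn₁ : (n₁:ℝ) ≤ x := Nat.cast_le.mpr (le_trans (le_trans (le_max_left _ _) (le_max_left _ _)) hN)
  have hxn₂ : (n₂:ℝ) ≤ x := Nat.cast_le.mpr (le_trans (le_trans (le_max_right _ _) (le_max_left _ _)) hN)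
  have hxn₃ : (n₃:ℝ) ≤ x := Nat.cast_le.mpr (le_trans (le_trans (le_max_left _ _) (le_max_right _ _)) hN)
  have hx1 : 1 ≤ x := by
    have h1 : (1:ℕ) ≤ N := le_trans (le_trans (le_max_right _ _) (le_max_right _ _)) hN
    rw [hxdef]
    exact_mod_cast h1
  have hx0 : 0 < x := by linarith
  have h2tx : 1 < 2*τ*x := by
    have := (div_lt_iff₀ (by positivity : (0:ℝ) < 2*τ)).mp (lt_of_lt_of_le hn₁ hxn₁)
    linarith
  have h12x : 2 < (1-2*τ)*x := by
    have := (div_lt_iff₀ h12).mp (lt_of_lt_of_le hn₂ hxn₂)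
    linarith
  have hsq13 : 13 < c * Real.sqrt x := by
    have h1 : Real.sqrt ((13/c)^2) < Real.sqrt x :=
      Real.sqrt_lt_sqrt (sq_nonneg _) (lt_of_lt_of_le hn₃ hxn₃)
    rw [Real.sqrt_sq (by positivity)] at h1
    have := (div_lt_iff₀ hc).mp h1
    linarith
  have hsx : 0 < Real.sqrt x := Real.sqrt_pos.mpr hx0
  have hsx1 : 1 ≤ Real.sqrt x := by
    have := Real.sqrt_le_sqrt hx1
    rwa [Real.sqrt_one] at this
  have hss : Real.sqrt x * Real.sqrt x = x := Real.mul_self_sqrt hx0.le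
  -- k₃ facts
  set k3 : ℕ := ⌈3*τ*x⌉₊ with hk3def
  have h3tx : 1 ≤ 3*τ*x := by linarith
  have hk3ge : 3*τ*x ≤ (k3:ℝ) := Nat.le_ceil _
  have hk3le : (k3:ℝ) ≤ 3*τ*x + 1 := (Nat.ceil_lt_add_one (by positivity)).le
  have hk3pos : 0 < k3 := Nat.ceil_pos.mpr (by positivity)
  have hk3r1 : 1 ≤ (k3:ℝ) := by exact_mod_cast hk3pos
  have htxx : 2*(τ*x) < x := by linarith
  have hk3lt : k3 < 3*N := by
    have h1 : (k3:ℝ) < 3*x := by linarith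
    have h2 : (k3:ℝ) < ((3*N : ℕ):ℝ) := by push_cast; rw [← hxdef]; linarith
    exact_mod_cast h2
  set m3 : ℕ := 3*N - k3 with hm3def
  have hm3cast : (m3:ℝ) = 3*x - k3 := by
    rw [hm3def, Nat.cast_sub hk3lt.le, hxdef]; push_cast; ring
  have hm3r1 : 1 ≤ (m3:ℝ) := by
    have : 1 ≤ m3 := by omega
    exact_mod_cast this
  have hm3le : (m3:ℝ) ≤ 3*(1-τ)*x := by rw [hm3cast]; linarith
  -- k₂ facts
  set k2 : ℕ := ⌈2*τ*x⌉₊ with hk2def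
  have hk2ge : 2*τ*x ≤ (k2:ℝ) := Nat.le_ceil _
  have hk2le : (k2:ℝ) ≤ 2*τ*x + 1 := (Nat.ceil_lt_add_one (by positivity)).le
  have hk2pos : 0 < k2 := Nat.ceil_pos.mpr (by positivity)
  have hk2r1 : 1 ≤ (k2:ℝ) := by exact_mod_cast hk2pos
  have hk2lt : k2 < N := by
    have : (k2:ℝ) < (N:ℝ) := by linarith
    exact_mod_cast this
  set m2 : ℕ := N - k2 with hm2def
  have hm2cast : (m2:ℝ) = x - k2 := by
    rw [hm2def, Nat.cast_sub hk2lt.le, hxdef]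
  have hm2ge : (1-2*τ)*x - 1 ≤ (m2:ℝ) := by rw [hm2cast]; linarith
  have hm2r1 : 1 ≤ (m2:ℝ) := by linarith
  -- positivity of real quantities
  have hk2r0 : (0:ℝ) < k2 := by linarith
  have hk3r0 : (0:ℝ) < k3 := by linarith
  have hm2r0 : (0:ℝ) < m2 := by linarith
  have hm3r0 : (0:ℝ) < m3 := by linarith
  -- φ bounds
  have B3 : (k3:ℝ)*Real.log k3 ≤ 3*τ*x*Real.log (3*τ*x) + Real.log (3*τ*x+1) + 1 := by
    have h1 := bre_phi_mono hk3r1 hk3le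
    have h2 := bre_phi_add_one h3tx
    linarith
  have B3' : (m3:ℝ)*Real.log m3 ≤ 3*(1-τ)*x*Real.log (3*(1-τ)*x) :=
    bre_phi_mono hm3r1 hm3le
  have B2 : 2*τ*x*Real.log (2*τ*x) ≤ (k2:ℝ)*Real.log k2 :=
    bre_phi_mono (le_of_lt h2tx) hk2ge
  have B2' : (1-2*τ)*x*Real.log ((1-2*τ)*x) - Real.log ((1-2*τ)*x) - 1 ≤ (m2:ℝ)*Real.log m2 := by
    have h1 := bre_phi_sub_one (le_of_lt h12x)
    have h2 := bre_phi_mono (by linarith : 1 ≤ (1-2*τ)*x - 1) (by linarith : (1-2*τ)*x - 1 ≤ (m2:ℝ))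
    linarith
  -- identity
  have hId : 3*x*Real.log (3*x) + 2*τ*x*Real.log (2*τ*x) + (1-2*τ)*x*Real.log ((1-2*τ)*x)
      + x*Real.log 2
      = x*Real.log x + 3*τ*x*Real.log (3*τ*x) + 3*(1-τ)*x*Real.log (3*(1-τ)*x)
      + 3*x*Real.log 2 + c*x := by
    rw [hcdef,
      show (3:ℝ)*x = 3*x from rfl,
      Real.log_mul (by norm_num) (ne_of_gt hx0),
      show (2:ℝ)*τ*x = (2*τ)*x by ring]
    rw [Real.log_mul (by positivity) (ne_of_gt hx0),
      Real.log_mul (by norm_num) (ne_of_gt hτ0),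
      Real.log_mul (ne_of_gt h12) (ne_of_gt hx0),
      show (3:ℝ)*τ*x = (3*τ)*x by ring,
      Real.log_mul (by positivity) (ne_of_gt hx0),
      Real.log_mul (by norm_num) (ne_of_gt hτ0),
      show (3:ℝ)*(1-τ)*x = (3*(1-τ))*x by ring,
      Real.log_mul (by positivity) (ne_of_gt hx0),
      Real.log_mul (by norm_num) (ne_of_gt h1τ)]
    ring
  -- sqrt bounds on log errors
  have S1 : Real.log (3*x+1) ≤ 4*Real.sqrt x := by
    have h1 := bre_log_le_two_sqrt (by linarith : 1 ≤ 3*x+1)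
    have h2 : Real.sqrt (3*x+1) ≤ Real.sqrt (4*x) := Real.sqrt_le_sqrt (by linarith)
    rw [bre_sqrt_four_mul x hx0.le] at h2
    linarith
  have S2 : Real.log (3*τ*x+1) ≤ 4*Real.sqrt x := by
    have h1 := bre_log_le_two_sqrt (by linarith : 1 ≤ 3*τ*x+1)
    have h2 : Real.sqrt (3*τ*x+1) ≤ Real.sqrt (4*x) := Real.sqrt_le_sqrt (by linarith)
    rw [bre_sqrt_four_mul x hx0.le] at h2
    linarith
  have S3 : Real.log ((1-2*τ)*x) ≤ 2*Real.sqrt x := by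
    have h1 := bre_log_le_two_sqrt (by linarith : 1 ≤ (1-2*τ)*x)
    have h2 : Real.sqrt ((1-2*τ)*x) ≤ Real.sqrt x := Real.sqrt_le_sqrt (by linarith)
    linarith
  have hcx : 13*Real.sqrt x < c*x := by
    have h1 := mul_lt_mul_of_pos_right hsq13 hsx
    rw [mul_assoc, hss] at h1
    linarith
  -- cast bounds from the ℕ lemmas
  have hA : ((3*N:ℕ)^(3*N) : ℝ)
      ≤ ((3*N:ℕ)+1) * (((3*N).choose k3 : ℝ) * (k3:ℝ)^k3 * (m3:ℝ)^m3) := by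
    have := bre_choose_lower (3*N) k3 hk3lt.le
    rw [← hm3def] at this
    exact_mod_cast this
  have hB : ((N.choose k2 : ℝ) * (k2:ℝ)^k2 * (m2:ℝ)^m2) ≤ (x:ℝ)^N := by
    have := bre_choose_upper N k2 hk2lt.le
    rw [← hm2def] at this
    rw [hxdef]
    exact_mod_cast this
  have hA' : (3*x)^(3*N) ≤ (3*x+1) * (((3*N).choose k3 : ℝ) * (k3:ℝ)^k3 * (m3:ℝ)^m3) := by
    have h9 : ((3*N:ℕ):ℝ) = 3*x := by push_cast; ring
    calc (3*x)^(3*N) = ((3*N:ℕ):ℝ)^(3*N) := by rw [h9]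
      _ ≤ ((3*N:ℕ)+1) * (((3*N).choose k3 : ℝ) * (k3:ℝ)^k3 * (m3:ℝ)^m3) := hA
      _ = (3*x+1) * (((3*N).choose k3 : ℝ) * (k3:ℝ)^k3 * (m3:ℝ)^m3) := by rw [h9]
  -- the product comparison via logs
  set PL : ℝ := (3*x)^(3*N) * (k2:ℝ)^k2 * (m2:ℝ)^m2 * (2:ℝ)^N with hPLdef
  set PR : ℝ := Real.exp (Real.sqrt x) * x^N * (3*x+1) * (k3:ℝ)^k3 * (m3:ℝ)^m3 * (2:ℝ)^(3*N)
    with hPRdef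
  have hPLpos : 0 < PL := by
    rw [hPLdef]
    exact mul_pos (mul_pos (mul_pos (pow_pos (by linarith) _) (pow_pos hk2r0 _))
      (pow_pos hm2r0 _)) (pow_pos two_pos _)
  have hPRpos : 0 < PR := by
    rw [hPRdef]
    exact mul_pos (mul_pos (mul_pos (mul_pos (mul_pos (Real.exp_pos _) (pow_pos hx0 _))
      (by linarith)) (pow_pos hk3r0 _)) (pow_pos hm3r0 _)) (pow_pos two_pos _)
  have hlogPL : Real.log PL = 3*x*Real.log (3*x) + (k2:ℝ)*Real.log k2 + (m2:ℝ)*Real.log m2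
      + x*Real.log 2 := by
    rw [hPLdef, Real.log_mul (by positivity) (by positivity),
      Real.log_mul (by positivity) (ne_of_gt (pow_pos hm2r0 _)),
      Real.log_mul (ne_of_gt (pow_pos (by linarith : (0:ℝ) < 3*x) _)) (ne_of_gt (pow_pos hk2r0 _)),
      Real.log_pow, Real.log_pow, Real.log_pow, Real.log_pow]
    push_cast
    ring
  have hlogPR : Real.log PR = Real.sqrt x + x*Real.log x + Real.log (3*x+1)
      + (k3:ℝ)*Real.log k3 + (m3:ℝ)*Real.log m3 + 3*x*Real.log 2 := by
    rw [hPRdef, Real.log_mul (by positivity) (by positivity),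
      Real.log_mul (by positivity) (ne_of_gt (pow_pos hm3r0 _)),
      Real.log_mul (by positivity) (ne_of_gt (pow_pos hk3r0 _)),
      Real.log_mul (by positivity) (by positivity : (3*x+1:ℝ) ≠ 0),
      Real.log_mul (ne_of_gt (Real.exp_pos _)) (ne_of_gt (pow_pos hx0 _)),
      Real.log_exp, Real.log_pow, Real.log_pow, Real.log_pow, Real.log_pow]
    push_cast
    ring
  -- the key comparison
  have hlt : Real.log PR < Real.log PL := by
    rw [hlogPR, hlogPL]
    linarith [B3, B3', B2, B2', hId, S1, S2, S3, hcx, hsx1]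
  have hPRPL : PR < PL := by
    calc PR = Real.exp (Real.log PR) := (Real.exp_log hPRpos).symm
      _ < Real.exp (Real.log PL) := Real.exp_lt_exp.mpr hlt
      _ = PL := Real.exp_log hPLpos
  -- assemble the final inequality
  rw [gt_iff_lt, binomMass, binomMass, Real.exp_one_rpow, ← mul_div_assoc,
    div_lt_div_iff₀ (by positivity) (by positivity)]
  -- goal : exp √x * ↑(N.choose k2) * 2^(3*N) < ↑((3*N).choose k3) * 2^N
  have hD : (0:ℝ) ≤ (3*x+1) * (k3:ℝ)^k3 * (m3:ℝ)^m3 * (k2:ℝ)^k2 * (m2:ℝ)^m2 := by positivity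
  refine lt_of_mul_lt_mul_right ?_ hD
  calc Real.exp (Real.sqrt x) * (N.choose k2 : ℝ) * 2^(3*N)
        * ((3*x+1) * (k3:ℝ)^k3 * (m3:ℝ)^m3 * (k2:ℝ)^k2 * (m2:ℝ)^m2)
      = Real.exp (Real.sqrt x) * ((3*x+1) * (k3:ℝ)^k3 * (m3:ℝ)^m3) * 2^(3*N)
        * ((N.choose k2 : ℝ) * (k2:ℝ)^k2 * (m2:ℝ)^m2) := by ring
    _ ≤ Real.exp (Real.sqrt x) * ((3*x+1) * (k3:ℝ)^k3 * (m3:ℝ)^m3) * 2^(3*N) * x^N := by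
        refine mul_le_mul_of_nonneg_left hB (by positivity)
    _ = PR := by rw [hPRdef]; ring
    _ < PL := hPRPL
    _ = (3*x)^(3*N) * ((k2:ℝ)^k2 * (m2:ℝ)^m2 * (2:ℝ)^N) := by rw [hPLdef]; ring
    _ ≤ ((3*x+1) * (((3*N).choose k3 : ℝ) * (k3:ℝ)^k3 * (m3:ℝ)^m3))
        * ((k2:ℝ)^k2 * (m2:ℝ)^m2 * (2:ℝ)^N) := by
        refine mul_le_mul_of_nonneg_right hA' (by positivity)
    _ = ((3*N).choose k3 : ℝ) * 2^N
        * ((3*x+1) * (k3:ℝ)^k3 * (m3:ℝ)^m3 * (k2:ℝ)^k2 * (m2:ℝ)^m2) := by ring
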